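/- Let δ ∈ 2^{-ℕ} and 0 < ε ≤ ε̄/2 with δ^{ε} ≤ 1/2 and δ^{ε̄ − ε} ≤ 1/4. Let A, B ⊆ (δ·ℤ) ∩ [0,1] be finite sets, and let B₁, …, B_N ⊆ B be pairwise disjoint subsets such that |B \ (B₁ ∪ ⋯ ∪ B_N)| ≤ δ^{2ε}|B|. Then 𝓔(A∣B,ε) ⊆ ⋃_𝒥 ⋂_{j ∈ 𝒥} 𝓔(A∣B_j, ε̄), where the union runs over all subsets 𝒥 ⊆ {1, …, N} with Σ_{j ∈ 𝒥} |B_j| ≥ δ^{ε}|B|/4. -/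

import Mathlib

open MeasureTheory Metric Set Pointwise

/-- δ is a dyadic scale: δ = 2^{-j} for some j ∈ ℕ. -/
def isDyadic (δ : ℝ) : Prop := ∃ j : ℕ, δ = 2 ^ (-(j : ℤ))

/-- The δ-grid (δ·ℤ) ∩ [0,1]. -/
def grid (δ : ℝ) : Set ℝ := {x : ℝ | (∃ k : ℤ, x = (k : ℝ) * δ) ∧ x ∈ Set.Icc (0:ℝ) 1}

/-- δ·ℤ -/
def gridZ (δ : ℝ) : Set ℝ := {x : ℝ | ∃ k : ℤ, x = (k : ℝ) * δ}

/-- Least number of dyadic intervals of length δ needed to cover X. -/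
noncomputable def covN (δ : ℝ) (X : Set ℝ) : ℕ :=
  sInf {n : ℕ | ∃ s : Finset ℤ, s.card = n ∧
    X ⊆ ⋃ k ∈ s, Set.Ico ((k : ℝ) * δ) (((k : ℝ) + 1) * δ)}

/-- Support of a measure on ℝ. -/
def sptm (ν : Measure ℝ) : Set ℝ := {x : ℝ | ∀ ε > 0, 0 < ν (Metric.ball x ε)}

/-- The projection π_c(x,y) = x + cy. -/
def piC (c : ℝ) : ℝ × ℝ → ℝ := fun p => p.1 + c * p.2

/-- The exceptional set 𝓔(A∣B,ε): those c for which some large subset B' ⊆ B has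
|A + cB'|_δ < δ^{-ε}|A|. -/
noncomputable def Eexc (δ ε : ℝ) (A B : Set ℝ) : Set ℝ :=
  {c : ℝ | ∃ B' ⊆ B, δ ^ ε * (B.ncard : ℝ) ≤ (B'.ncard : ℝ) ∧
    (covN δ (A + c • B') : ℝ) < δ ^ (-ε) * (A.ncard : ℝ)}

/-- k-fold sumset (sumN 0 A = {0}). -/
def sumN : ℕ → Set ℝ → Set ℝ
  | 0, _ => {0}
  | (n+1), A => sumN n A + A

lemma grid_finite {δ : ℝ} (hδ : 0 < δ) : (grid δ).Finite := by
  apply Set.Finite.subset ((Set.finite_Icc (0:ℤ) ⌈1/δ⌉).image (fun k : ℤ => (k:ℝ)*δ))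
  rintro x ⟨⟨k, rfl⟩, hx0, hx1⟩
  refine ⟨k, ⟨?_, ?_⟩, rfl⟩
  · have : (0:ℝ) ≤ (k:ℝ) := le_of_mul_le_mul_right (by simpa using hx0) hδ
    exact_mod_cast this
  · have hk : (k:ℝ) ≤ 1/δ := by rw [le_div_iff₀ hδ]; linarith
    exact_mod_cast hk.trans (Int.le_ceil _)

lemma exists_cover {δ : ℝ} (hδ : 0 < δ) {X : Set ℝ} (hX : X.Finite) :
    ∃ s : Finset ℤ, X ⊆ ⋃ k ∈ s, Set.Ico ((k : ℝ) * δ) (((k : ℝ) + 1) * δ) := by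
  refine ⟨hX.toFinset.image (fun x => ⌊x/δ⌋), fun x hx => ?_⟩
  simp only [Set.mem_iUnion, Finset.mem_image]
  refine ⟨⌊x/δ⌋, ⟨⟨x, by simpa using hx, rfl⟩, ?_, ?_⟩⟩
  · rw [← le_div_iff₀ hδ]; exact Int.floor_le _
  · rw [← div_lt_iff₀ hδ]; push_cast; exact Int.lt_floor_add_one _

lemma covN_mono {δ : ℝ} (hδ : 0 < δ) {X Y : Set ℝ} (hXY : X ⊆ Y) (hY : Y.Finite) :
    covN δ X ≤ covN δ Y := by
  obtain ⟨s, hs⟩ := exists_cover hδ hY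
  have hne : {n : ℕ | ∃ s : Finset ℤ, s.card = n ∧
      Y ⊆ ⋃ k ∈ s, Set.Ico ((k : ℝ) * δ) (((k : ℝ) + 1) * δ)}.Nonempty := ⟨s.card, s, rfl, hs⟩
  obtain ⟨t, ht, htcov⟩ := Nat.sInf_mem hne
  exact Nat.sInf_le ⟨t, ht, hXY.trans htcov⟩

lemma ncard_iUnion_le {N : ℕ} (S : Fin N → Set ℝ) (h : ∀ j, (S j).Finite) :
    (⋃ j, S j).ncard ≤ ∑ j, (S j).ncard := by
  classical
  have heq : (⋃ j, S j) = ↑(Finset.univ.biUnion fun j => (h j).toFinset) := by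
    ext x; simp
  rw [heq, Set.ncard_coe_finset]
  refine (Finset.card_biUnion_le).trans (Finset.sum_le_sum fun j _ => ?_)
  rw [Set.ncard_eq_toFinset_card _ (h j)]

lemma sum_ncard_le {N : ℕ} (Bs : Fin N → Set ℝ) (B : Set ℝ) (hBfin : B.Finite)
    (hBs : ∀ j, Bs j ⊆ B) (hdisj : Pairwise (Function.onFun Disjoint Bs))
    (s : Finset (Fin N)) : ∑ j ∈ s, (Bs j).ncard ≤ B.ncard := by
  classical
  have hf : ∀ j, (Bs j).Finite := fun j => hBfin.subset (hBs j)
  have h1 : ∑ j ∈ s, (Bs j).ncard = (s.biUnion fun j => (hf j).toFinset).card := by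
    rw [Finset.card_biUnion]
    · exact Finset.sum_congr rfl fun j _ => Set.ncard_eq_toFinset_card _ (hf j)
    · intro i _ j _ hij
      rw [Function.onFun, Finset.disjoint_left]
      intro a hai haj
      exact ((hdisj hij).le_bot ⟨by simpa using hai, by simpa using haj⟩)
  rw [h1, Set.ncard_eq_toFinset_card _ hBfin]
  apply Finset.card_le_card
  intro a ha
  simp only [Finset.mem_biUnion, Set.Finite.mem_toFinset] at ha ⊢
  obtain ⟨j, _, haj⟩ := ha
  exact hBs j haj

/-- The inclusion 𝓔(A∣B,ε) ⊆ ⋃_𝒥 ⋂_{j∈𝒥} 𝓔(A∣B_j,ε̄) over heavy index sets 𝒥. -/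
theorem stmt10 (δ ε εb : ℝ) (hδ : isDyadic δ) (hε : 0 < ε) (hεεb : ε ≤ εb / 2)
    (h1 : δ ^ ε ≤ 1/2) (h2 : δ ^ (εb - ε) ≤ 1/4)
    (A B : Set ℝ) (hA : A ⊆ grid δ) (hB : B ⊆ grid δ)
    (N : ℕ) (Bs : Fin N → Set ℝ) (hBs : ∀ j, Bs j ⊆ B)
    (hdisj : Pairwise (Function.onFun Disjoint Bs))
    (hsmall : (((B \ ⋃ j, Bs j).ncard : ℝ)) ≤ δ ^ (2 * ε) * (B.ncard : ℝ)) :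
    Eexc δ ε A B ⊆
      ⋃ J ∈ {J : Finset (Fin N) | δ ^ ε * (B.ncard : ℝ) / 4 ≤ ∑ j ∈ J, ((Bs j).ncard : ℝ)},
        ⋂ j ∈ J, Eexc δ εb A (Bs j) := by
  classical
  obtain ⟨j0, hδeq⟩ := hδ
  have hδpos : 0 < δ := by rw [hδeq]; positivity
  have hδ1 : δ ≤ 1 := by
    rw [hδeq]
    calc (2:ℝ) ^ (-(j0:ℤ)) ≤ 2 ^ (0:ℤ) := by
          apply zpow_le_one_of_nonpos₀ (by norm_num) (by simp)
      _ = 1 := by norm_num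
  intro c hc
  obtain ⟨B', hB'B, hcard, hcov⟩ := hc
  have hBfin : B.Finite := (grid_finite hδpos).subset hB
  have hAfin : A.Finite := (grid_finite hδpos).subset hA
  have hB'fin : B'.Finite := hBfin.subset hB'B
  have hBsfin : ∀ j, (Bs j).Finite := fun j => hBfin.subset (hBs j)
  set J : Finset (Fin N) :=
    Finset.univ.filter (fun j => δ ^ εb * ((Bs j).ncard : ℝ) ≤ (((B' ∩ Bs j).ncard : ℝ))) with hJ
  have hδε : (0:ℝ) < δ ^ ε := Real.rpow_pos_of_pos hδpos ε
  have hεb : ε ≤ εb := by linarith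
  -- membership in each Eexc for j ∈ J
  have hmem : ∀ j ∈ J, c ∈ Eexc δ εb A (Bs j) := by
    intro j hj
    rw [hJ, Finset.mem_filter] at hj
    refine ⟨B' ∩ Bs j, Set.inter_subset_right, hj.2, ?_⟩
    have hmono : covN δ (A + c • (B' ∩ Bs j)) ≤ covN δ (A + c • B') := by
      apply covN_mono hδpos
      · exact Set.add_subset_add_left (Set.smul_set_mono Set.inter_subset_left)
      · exact hAfin.add hB'fin.smul_set
    have hle : δ ^ (-ε) * (A.ncard : ℝ) ≤ δ ^ (-εb) * (A.ncard : ℝ) := by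
      apply mul_le_mul_of_nonneg_right _ (Nat.cast_nonneg _)
      exact Real.rpow_le_rpow_of_exponent_ge hδpos hδ1 (by linarith)
    calc (covN δ (A + c • (B' ∩ Bs j)) : ℝ) ≤ (covN δ (A + c • B') : ℝ) := by exact_mod_cast hmono
      _ < δ ^ (-ε) * (A.ncard : ℝ) := hcov
      _ ≤ δ ^ (-εb) * (A.ncard : ℝ) := hle
  -- counting estimate
  have hsplit : (B'.ncard : ℝ) ≤ ((B \ ⋃ j, Bs j).ncard : ℝ)
      + ∑ j, ((B' ∩ Bs j).ncard : ℝ) := by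
    have hsub : B' ⊆ (B \ ⋃ j, Bs j) ∪ ⋃ j, (B' ∩ Bs j) := by
      intro x hx
      by_cases hxu : x ∈ ⋃ j, Bs j
      · right
        obtain ⟨_, ⟨j, rfl⟩, hxj⟩ := hxu
        exact Set.mem_iUnion.2 ⟨j, hx, hxj⟩
      · exact Or.inl ⟨hB'B hx, hxu⟩
    have h1' : B'.ncard ≤ (B \ ⋃ j, Bs j).ncard + (⋃ j, (B' ∩ Bs j)).ncard := by
      refine le_trans (Set.ncard_le_ncard hsub ?_) (Set.ncard_union_le _ _)
      exact ((hBfin.subset Set.diff_subset).union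
        ((Set.finite_iUnion (fun j => (hBsfin j).inter_of_right _))))
    have h2' : (⋃ j, (B' ∩ Bs j)).ncard ≤ ∑ j, (B' ∩ Bs j).ncard :=
      ncard_iUnion_le _ (fun j => hB'fin.inter_of_left _)
    have := h1'.trans (Nat.add_le_add_left h2' _)
    exact_mod_cast this
  have hsumsplit : ∑ j, ((B' ∩ Bs j).ncard : ℝ)
      = ∑ j ∈ J, ((B' ∩ Bs j).ncard : ℝ) + ∑ j ∈ Jᶜ, ((B' ∩ Bs j).ncard : ℝ) :=
    (Finset.sum_add_sum_compl J _).symm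
  have hJbound : ∑ j ∈ J, ((B' ∩ Bs j).ncard : ℝ) ≤ ∑ j ∈ J, ((Bs j).ncard : ℝ) := by
    apply Finset.sum_le_sum
    intro j _
    exact_mod_cast Set.ncard_le_ncard Set.inter_subset_right (hBsfin j)
  have hJcbound : ∑ j ∈ Jᶜ, ((B' ∩ Bs j).ncard : ℝ)
      ≤ δ ^ εb * (B.ncard : ℝ) := by
    calc ∑ j ∈ Jᶜ, ((B' ∩ Bs j).ncard : ℝ) ≤ ∑ j ∈ Jᶜ, δ ^ εb * ((Bs j).ncard : ℝ) := by
          apply Finset.sum_le_sum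
          intro j hj
          rw [Finset.mem_compl, hJ, Finset.mem_filter] at hj
          push_neg at hj
          exact (hj (Finset.mem_univ j)).le
      _ = δ ^ εb * ∑ j ∈ Jᶜ, ((Bs j).ncard : ℝ) := by rw [Finset.mul_sum]
      _ ≤ δ ^ εb * (B.ncard : ℝ) := by
          apply mul_le_mul_of_nonneg_left _ (Real.rpow_nonneg hδpos.le _)
          exact_mod_cast sum_ncard_le Bs B hBfin hBs hdisj Jᶜ
  have h2e : δ ^ (2*ε) ≤ δ ^ ε * (1/2) := by
    rw [two_mul, Real.rpow_add hδpos]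
    exact mul_le_mul_of_nonneg_left h1 hδε.le
  have heb : δ ^ εb ≤ δ ^ ε * (1/4) := by
    have : δ ^ εb = δ ^ ε * δ ^ (εb - ε) := by
      rw [← Real.rpow_add hδpos]; ring_nf
    rw [this]
    exact mul_le_mul_of_nonneg_left h2 hδε.le
  have hBnn : (0:ℝ) ≤ (B.ncard : ℝ) := Nat.cast_nonneg _
  have hkey : δ ^ ε * (B.ncard : ℝ) / 4 ≤ ∑ j ∈ J, ((Bs j).ncard : ℝ) := by
    have c1 : δ ^ (2*ε) * (B.ncard:ℝ) ≤ δ ^ ε * (B.ncard:ℝ) * (1/2) := by nlinarith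
    have c2 : δ ^ εb * (B.ncard:ℝ) ≤ δ ^ ε * (B.ncard:ℝ) * (1/4) := by nlinarith
    nlinarith [hcard, hsplit, hsumsplit, hJbound, hJcbound, hsmall]
  simp only [Set.mem_iUnion, Set.mem_setOf_eq]
  exact ⟨J, hkey, Set.mem_iInter₂.2 hmem⟩
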